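/- Distribution of the sum: let N ~ MPMRF(λ, α, T), choose any root r with the convention α_{(pa(r),r)} = 0, and set M = Σ_{v∈V} N_v. Then M has a compound Poisson distribution: its pgf satisfies E[t^M] = exp( λ_M (P_C(t) − 1) ) for t ∈ [−1,1], where λ_M = λ(d − Σ_{e∈E} α_e) > 0 and P_C(t) = Σ_{v∈V} [ (1 − α_{(pa(v),v)}) / (d − Σ_{e∈E} α_e) ] · η_v(t·1), with η_v the recursively defined polynomials η_v(t·1) = t ∏_{j∈ch(v)} (1 − α_{(v,j)} + α_{(v,j)} η_j(t·1)) (η_v(t·1) = t for leaves). Moreover P_C is the pgf of an ℕ-valued random variable C_M with mean E[C_M] = d / (d − Σ_{e∈E} α_e). -/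

import Mathlib

open MeasureTheory ProbabilityTheory
open scoped ProbabilityTheory

/-- The Poisson probability mass function with mean `lam`, evaluated at `k`. -/
noncomputable def poissonProb (lam : ℝ) (k : ℕ) : ℝ :=
  Real.exp (-lam) * lam ^ k / (Nat.factorial k)

/-- The MPMRF construction: a tree-structured Markov random field with Poisson(`lam`)
marginals, built on a tree `G` rooted at `root` via the stochastic representation
`N_root = L_root` and `N_v = α_{(pa v, v)} ∘ N_{pa v} + L_v` for `v ≠ root`, where `∘`
denotes binomial thinning (realized through the i.i.d. Bernoulli indicators `I v i`),
the innovations `L_v` are Poisson, and all innovations and indicator sequences are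
mutually independent. -/
structure MPMRF {V : Type} [Fintype V] [DecidableEq V]
    (G : SimpleGraph V) (lam : ℝ) (alpha : Sym2 V → ℝ)
    (Ω : Type) [MeasureSpace Ω] : Type where
  /-- the underlying graph is a tree -/
  isTree : G.IsTree
  lam_pos : 0 < lam
  alpha_mem : ∀ e ∈ G.edgeSet, alpha e ∈ Set.Icc (0 : ℝ) 1
  /-- the chosen root -/
  root : V
  /-- the parent function of the rooted tree -/
  pa : V → V
  pa_adj : ∀ v, v ≠ root → G.Adj (pa v) v
  pa_dist : ∀ v, v ≠ root → G.dist root (pa v) + 1 = G.dist root v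
  /-- innovation random variables -/
  L : V → Ω → ℕ
  /-- Bernoulli indicators used in the binomial thinnings -/
  I : V → ℕ → Ω → ℕ
  /-- the components of the Markov random field -/
  N : V → Ω → ℕ
  meas_L : ∀ v, Measurable (L v)
  meas_I : ∀ v i, Measurable (I v i)
  meas_N : ∀ v, Measurable (N v)
  I_le_one : ∀ v i ω, I v i ω ≤ 1
  I_bern : ∀ v, v ≠ root → ∀ i,
    ℙ {ω | I v i ω = 1} = ENNReal.ofReal (alpha s(pa v, v))
  L_root_poisson : ∀ k, ℙ {ω | L root ω = k} = ENNReal.ofReal (poissonProb lam k)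
  L_poisson : ∀ v, v ≠ root → ∀ k,
    ℙ {ω | L v ω = k} =
      ENNReal.ofReal (poissonProb (lam * (1 - alpha s(pa v, v))) k)
  /-- the innovations and all indicator variables are mutually independent -/
  indep : iIndepFun
    (Sum.elim L (fun p : V × ℕ => I p.1 p.2)) ℙ
  N_root : N root = L root
  N_rec : ∀ v, v ≠ root → ∀ ω,
    N v ω = (∑ i ∈ Finset.range (N (pa v) ω), I v i ω) + L v ω

namespace MPMRF
variable {V : Type} [Fintype V] [DecidableEq V]
    {G : SimpleGraph V} {lam : ℝ} {alpha : Sym2 V → ℝ}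
    {Ω : Type} [MeasureSpace Ω]
    (M : MPMRF G lam alpha Ω)

include M

/-- the alpha of the edge to the parent, with convention 0 at the root. -/
noncomputable def a (v : V) : ℝ := if v = M.root then 0 else alpha s(M.pa v, v)

/-- children of a vertex -/
def ch (v : V) : Finset V := Finset.univ.filter (fun j => j ≠ M.root ∧ M.pa j = v)

/-- depth -/
noncomputable def dep (v : V) : ℕ := G.dist M.root v

lemma dep_root : M.dep M.root = 0 := SimpleGraph.dist_self

lemma conn : G.Connected := SimpleGraph.IsTree.isConnected M.isTree

lemma dep_eq_zero_iff {v : V} : M.dep v = 0 ↔ v = M.root := by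
  constructor
  · intro h
    have := ((M.conn M.root v).dist_eq_zero_iff).1 h
    exact this.symm
  · rintro rfl; exact M.dep_root

lemma dep_lt_card (v : V) : M.dep v < Fintype.card V := by
  obtain ⟨p, hp⟩ := (M.conn M.root v).exists_walk_length_eq_dist
  have h1 : G.dist M.root v ≤ (p.toPath : G.Walk M.root v).length :=
    SimpleGraph.dist_le _
  exact lt_of_le_of_lt h1 (p.toPath.2.length_lt)

lemma card_pos : 0 < Fintype.card V := by
  have : Nonempty V := M.conn.nonempty
  exact Fintype.card_pos

lemma dep_child {j v : V} (hj : j ∈ M.ch v) : M.dep j = M.dep v + 1 := by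
  have h := Finset.mem_filter.1 hj
  have := M.pa_dist j h.2.1
  rw [h.2.2] at this
  exact this.symm

lemma ch_mem_ne_root {j v : V} (hj : j ∈ M.ch v) : j ≠ M.root :=
  (Finset.mem_filter.1 hj).2.1

lemma ch_mem_pa {j v : V} (hj : j ∈ M.ch v) : M.pa j = v :=
  (Finset.mem_filter.1 hj).2.2

lemma a_child {j v : V} (hj : j ∈ M.ch v) : M.a j = alpha s(v, j) := by
  rw [a, if_neg (M.ch_mem_ne_root hj), M.ch_mem_pa hj]

lemma alpha_pa_mem {v : V} (hv : v ≠ M.root) : alpha s(M.pa v, v) ∈ Set.Icc (0:ℝ) 1 :=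
  M.alpha_mem _ (by rw [SimpleGraph.mem_edgeSet]; exact M.pa_adj v hv)

lemma a_mem (v : V) : M.a v ∈ Set.Icc (0:ℝ) 1 := by
  by_cases hv : v = M.root
  · simp [a, hv]
  · rw [a, if_neg hv]; exact M.alpha_pa_mem hv

lemma ch_eq_empty {v : V} (h : Fintype.card V - 1 ≤ M.dep v) : M.ch v = ∅ := by
  rw [Finset.eq_empty_iff_forall_notMem]
  intro j hj
  have h1 := M.dep_child hj
  have h2 := M.dep_lt_card j
  have h3 := M.dep_lt_card v
  omega

lemma dep_pa_iter : ∀ (i : ℕ) (u : V), i ≤ M.dep u →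
    M.dep (M.pa^[i] u) = M.dep u - i := by
  intro i
  induction i with
  | zero => intro u _; simp
  | succ i ih =>
    intro u hu
    have hu0 : u ≠ M.root := by
      intro h; rw [h, M.dep_root] at hu; omega
    have hpa : M.dep (M.pa u) = M.dep u - 1 := by
      have := M.pa_dist u hu0; unfold dep; omega
    rw [Function.iterate_succ_apply]
    rw [ih (M.pa u) (by omega), hpa]
    omega

lemma pa_iter_root (u : V) : M.pa^[M.dep u] u = M.root := by
  have := M.dep_pa_iter (M.dep u) u le_rfl
  simp at this
  exact (M.dep_eq_zero_iff.1 this)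

section edge
variable [DecidableRel G.Adj]

lemma sum_alpha_edges : ∑ e ∈ G.edgeFinset, alpha e = ∑ v, M.a v := by
  classical
  have hinj : Set.InjOn (fun v => s(M.pa v, v)) (Finset.univ.filter (· ≠ M.root)) := by
    intro x hx y hy hxy
    simp only [Finset.coe_filter, Set.mem_setOf_eq] at hx hy
    simp only [Sym2.eq, Sym2.rel_iff', Prod.mk.injEq, Prod.swap_prod_mk] at hxy
    rcases hxy with ⟨-, h⟩ | ⟨h1, h2⟩
    · exact h
    · exfalso
      have dx := M.pa_dist x hx.2
      have dy := M.pa_dist y hy.2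
      rw [h1] at dx; rw [← h2] at dy
      omega
  have himg : (Finset.univ.filter (· ≠ M.root)).image (fun v => s(M.pa v, v))
      = G.edgeFinset := by
    apply Finset.eq_of_subset_of_card_le
    · intro e he
      obtain ⟨v, hv, rfl⟩ := Finset.mem_image.1 he
      rw [SimpleGraph.mem_edgeFinset, SimpleGraph.mem_edgeSet]
      exact M.pa_adj v (Finset.mem_filter.1 hv).2
    · rw [Finset.card_image_of_injOn hinj]
      have hc := M.isTree.card_edgeFinset
      have : (Finset.univ.filter (· ≠ M.root)) = Finset.univ.erase M.root := by
        ext x; simp [Finset.mem_erase, and_comm]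
      rw [this, Finset.card_erase_of_mem (Finset.mem_univ _), Finset.card_univ]
      omega
  rw [← himg, Finset.sum_image (fun x hx y hy h => hinj hx hy h)]
  rw [← Finset.sum_filter_add_sum_filter_not Finset.univ (· ≠ M.root) (M.a ·)]
  have h2 : ∑ v ∈ Finset.univ.filter (¬ · ≠ M.root), M.a v = 0 := by
    apply Finset.sum_eq_zero
    intro x hx
    simp only [Finset.mem_filter, not_not] at hx
    simp [a, hx.2]
  rw [h2, add_zero]
  apply Finset.sum_congr rfl
  intro x hx
  simp only [Finset.mem_filter] at hx
  rw [a, if_neg hx.2]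

lemma D_pos : 0 < (Fintype.card V : ℝ) - ∑ e ∈ G.edgeFinset, alpha e := by
  have h1 : ∑ e ∈ G.edgeFinset, alpha e ≤ (G.edgeFinset.card : ℝ) := by
    calc ∑ e ∈ G.edgeFinset, alpha e ≤ ∑ _e ∈ G.edgeFinset, (1:ℝ) := by
          apply Finset.sum_le_sum
          intro e he
          exact (M.alpha_mem e (SimpleGraph.mem_edgeFinset.1 he)).2
      _ = (G.edgeFinset.card : ℝ) := by simp
  have h2 := M.isTree.card_edgeFinset
  have : (G.edgeFinset.card : ℝ) < Fintype.card V := by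
    exact_mod_cast (by omega : G.edgeFinset.card < Fintype.card V)
  linarith

end edge
end MPMRF
namespace MPMRF
variable {V : Type} [Fintype V] [DecidableEq V]
    {G : SimpleGraph V} {lam : ℝ} {alpha : Sym2 V → ℝ}
    {Ω : Type} [MeasureSpace Ω]
    (M : MPMRF G lam alpha Ω)

/-- the subtree below `v`, computed with fuel `k` -/
def subF (M : MPMRF G lam alpha Ω) : ℕ → V → Finset V
  | 0, v => {v}
  | (k+1), v => insert v ((M.ch v).biUnion (M.subF k))

@[simp] lemma subF_zero (v : V) : M.subF 0 v = {v} := rfl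
lemma subF_succ (k : ℕ) (v : V) :
    M.subF (k+1) v = insert v ((M.ch v).biUnion (M.subF k)) := rfl

lemma mem_subF_self (k : ℕ) (v : V) : v ∈ M.subF k v := by
  cases k with
  | zero => simp
  | succ k => rw [subF_succ]; exact Finset.mem_insert_self _ _

lemma mem_subF_dep {k : ℕ} : ∀ {v u : V}, u ∈ M.subF k v →
    M.dep v ≤ M.dep u ∧ M.pa^[M.dep u - M.dep v] u = v := by
  induction k with
  | zero => intro v u hu; simp at hu; subst hu; simp
  | succ k ih =>
    intro v u hu
    rw [subF_succ, Finset.mem_insert] at hu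
    rcases hu with rfl | hu
    · simp
    · obtain ⟨j, hj, hu⟩ := Finset.mem_biUnion.1 hu
      obtain ⟨h1, h2⟩ := ih hu
      have hdj := M.dep_child hj
      have hpj := M.ch_mem_pa hj
      constructor
      · omega
      · have : M.dep u - M.dep v = (M.dep u - M.dep j) + 1 := by omega
        rw [this, Function.iterate_succ_apply', h2, hpj]

lemma not_mem_subF_of_dep {k : ℕ} {v u : V} (h : M.dep u < M.dep v) :
    u ∉ M.subF k v := fun hu => absurd (M.mem_subF_dep hu).1 (by omega)

lemma subF_child_disjoint {k : ℕ} {v : V} {j j' : V} (hj : j ∈ M.ch v)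
    (hj' : j' ∈ M.ch v) (hne : j ≠ j') : Disjoint (M.subF k j) (M.subF k j') := by
  rw [Finset.disjoint_left]
  intro u hu hu'
  obtain ⟨h1, h2⟩ := M.mem_subF_dep hu
  obtain ⟨h1', h2'⟩ := M.mem_subF_dep hu'
  have e1 := M.dep_child hj
  have e2 := M.dep_child hj'
  apply hne
  rw [← h2, ← h2', e1, e2]

lemma not_mem_biUnion_subF {k : ℕ} {v : V} : v ∉ (M.ch v).biUnion (M.subF k) := by
  intro hv
  obtain ⟨j, hj, hv⟩ := Finset.mem_biUnion.1 hv
  have := (M.mem_subF_dep hv).1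
  have := M.dep_child hj
  omega

lemma mem_subF_of_child {k : ℕ} {v j u : V} (hj : j ∈ M.ch v) (hu : u ∈ M.subF k j) :
    u ∈ M.subF (k+1) v := by
  rw [subF_succ, Finset.mem_insert]
  exact Or.inr (Finset.mem_biUnion.2 ⟨j, hj, hu⟩)

lemma subF_mono {k : ℕ} {v : V} : M.subF k v ⊆ M.subF (k+1) v := by
  induction k generalizing v with
  | zero => intro u hu; simp at hu; subst hu; exact M.mem_subF_self _ _
  | succ k ih =>
    intro u hu
    rw [subF_succ, Finset.mem_insert] at hu
    rcases hu with rfl | hu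
    · exact M.mem_subF_self _ _
    · obtain ⟨j, hj, hu⟩ := Finset.mem_biUnion.1 hu
      exact M.mem_subF_of_child hj (ih hu)

lemma mem_subF_of_iter : ∀ (d : ℕ) (k : ℕ) (v u : V), d ≤ k →
    M.dep v + d = M.dep u → M.pa^[d] u = v → u ∈ M.subF k v := by
  intro d
  induction d with
  | zero => intro k v u _ _ h3; simp at h3; subst h3; exact M.mem_subF_self _ _
  | succ d ih =>
    intro k v u hk hdep hiter
    obtain ⟨k', rfl⟩ : ∃ k', k = k' + 1 := ⟨k - 1, by omega⟩
    set j := M.pa^[d] u with hj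
    have hdu : d ≤ M.dep u := by omega
    have hdj : M.dep j = M.dep u - d := M.dep_pa_iter d u hdu
    have hjne : j ≠ M.root := by
      intro h
      have : M.dep j = 0 := by rw [h, M.dep_root]
      omega
    have hpaj : M.pa j = v := by
      rw [hj, ← Function.iterate_succ_apply' M.pa d u]; exact hiter
    have hjch : j ∈ M.ch v := Finset.mem_filter.2 ⟨Finset.mem_univ _, hjne, hpaj⟩
    apply M.mem_subF_of_child hjch
    exact ih k' j u (by omega) (by omega) rfl

lemma subF_root_eq_univ : M.subF (Fintype.card V) M.root = Finset.univ := by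
  rw [Finset.eq_univ_iff_forall]
  intro u
  apply M.mem_subF_of_iter (M.dep u) _ _ _ (le_of_lt (M.dep_lt_card u))
  · rw [M.dep_root]; omega
  · exact M.pa_iter_root u

lemma sum_subF_succ {β : Type*} [AddCommMonoid β] (k : ℕ) (v : V) (f : V → β) :
    ∑ u ∈ M.subF (k+1) v, f u = f v + ∑ j ∈ M.ch v, ∑ u ∈ M.subF k j, f u := by
  rw [subF_succ, Finset.sum_insert (M.not_mem_biUnion_subF),
    Finset.sum_biUnion]
  intro j hj j' hj' hne
  exact M.subF_child_disjoint hj hj' hne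

end MPMRF
open Polynomial in
lemma coeff_nonneg_mul {p q : Polynomial ℝ} (hp : ∀ n, 0 ≤ p.coeff n)
    (hq : ∀ n, 0 ≤ q.coeff n) : ∀ n, 0 ≤ (p * q).coeff n := by
  intro n
  rw [Polynomial.coeff_mul]
  exact Finset.sum_nonneg fun x _ => mul_nonneg (hp _) (hq _)

open Polynomial in
lemma coeff_nonneg_prod {β : Type*} {s : Finset β} {f : β → Polynomial ℝ}
    (h : ∀ j ∈ s, ∀ n, 0 ≤ (f j).coeff n) : ∀ n, 0 ≤ (∏ j ∈ s, f j).coeff n :=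
  Finset.prod_induction f (fun p => ∀ n, 0 ≤ p.coeff n)
    (fun _ _ hp hq => coeff_nonneg_mul hp hq)
    (fun n => by rw [Polynomial.coeff_one]; split <;> norm_num) h

open Polynomial in
lemma abs_eval_le_eval_one {p : Polynomial ℝ} (hp : ∀ n, 0 ≤ p.coeff n) {t : ℝ}
    (ht : |t| ≤ 1) : |p.eval t| ≤ p.eval 1 := by
  rw [Polynomial.eval_eq_sum_range, Polynomial.eval_eq_sum_range]
  calc |∑ i ∈ Finset.range (p.natDegree + 1), p.coeff i * t ^ i|
      ≤ ∑ i ∈ Finset.range (p.natDegree + 1), |p.coeff i * t ^ i| :=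
        Finset.abs_sum_le_sum_abs _ _
    _ ≤ ∑ i ∈ Finset.range (p.natDegree + 1), p.coeff i * 1 ^ i := by
        apply Finset.sum_le_sum
        intro i _
        rw [abs_mul, abs_of_nonneg (hp i), one_pow]
        calc p.coeff i * |t ^ i| ≤ p.coeff i * 1 := by
              apply mul_le_mul_of_nonneg_left _ (hp i)
              rw [abs_pow]
              exact pow_le_one₀ (abs_nonneg t) ht
          _ = p.coeff i * 1 := rfl

namespace MPMRF
variable {V : Type} [Fintype V] [DecidableEq V]
    {G : SimpleGraph V} {lam : ℝ} {alpha : Sym2 V → ℝ}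
    {Ω : Type} [MeasureSpace Ω]
    (M : MPMRF G lam alpha Ω)

/-- secondary pgf polynomial with fuel -/
noncomputable def qP (M : MPMRF G lam alpha Ω) : ℕ → V → Polynomial ℝ
  | 0, _ => Polynomial.X
  | (k+1), v => Polynomial.X * ∏ j ∈ M.ch v,
      (Polynomial.C (1 - alpha s(v, j)) + Polynomial.C (alpha s(v, j)) * M.qP k j)

include M

lemma qP_stable : ∀ (k : ℕ) (v : V), Fintype.card V - 1 ≤ k + M.dep v →
    M.qP (k+1) v = M.qP k v := by
  intro k
  induction k with
  | zero =>
    intro v hv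
    show Polynomial.X * _ = Polynomial.X
    rw [M.ch_eq_empty (by omega), Finset.prod_empty, mul_one]
  | succ k ih =>
    intro v hv
    show Polynomial.X * _ = Polynomial.X * _
    congr 1
    apply Finset.prod_congr rfl
    intro j hj
    rw [ih j (by have := M.dep_child hj; omega)]

/-- the secondary pgf polynomial at a vertex -/
noncomputable def Q (v : V) : Polynomial ℝ := M.qP (Fintype.card V) v

lemma qP_ge_eq : ∀ (k : ℕ), Fintype.card V - 1 ≤ k → ∀ v,
    M.qP k v = M.qP (Fintype.card V - 1) v := by
  intro k
  induction k with
  | zero =>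
    intro h v
    have h0 : Fintype.card V - 1 = 0 := by omega
    rw [h0]
  | succ k ih =>
    intro h v
    rcases Nat.lt_or_ge k (Fintype.card V - 1) with h' | h'
    · have h0 : Fintype.card V - 1 = k + 1 := by omega
      rw [h0]
    · rw [M.qP_stable k v (by omega), ih h' v]

lemma qP_ge_eq_Q : ∀ (k : ℕ) (v : V), Fintype.card V - 1 ≤ k → M.qP k v = M.Q v := by
  intro k v hk
  rw [M.qP_ge_eq k hk v, Q, M.qP_ge_eq (Fintype.card V) (by omega) v]

lemma Q_eq (v : V) : M.Q v = Polynomial.X * ∏ j ∈ M.ch v,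
    (Polynomial.C (1 - alpha s(v, j)) + Polynomial.C (alpha s(v, j)) * M.Q j) := by
  have hc := M.card_pos
  have h1 : M.Q v = M.qP (Fintype.card V - 1 + 1) v := by
    rw [M.qP_ge_eq_Q (Fintype.card V - 1 + 1) v (by omega)]
  rw [h1]
  show Polynomial.X * _ = Polynomial.X * _
  congr 1
  exact Finset.prod_congr rfl fun j _ => by rw [M.qP_ge_eq_Q _ j (by omega)]

lemma qP_coeff_nonneg : ∀ (k : ℕ) (v : V) (n : ℕ), 0 ≤ (M.qP k v).coeff n := by
  intro k
  induction k with
  | zero =>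
    intro v n
    show (0:ℝ) ≤ Polynomial.X.coeff n
    rw [Polynomial.coeff_X]
    split <;> norm_num
  | succ k ih =>
    intro v n
    show (0:ℝ) ≤ (Polynomial.X * _).coeff n
    apply coeff_nonneg_mul
    · intro m; rw [Polynomial.coeff_X]; split <;> norm_num
    · apply coeff_nonneg_prod
      intro j hj m
      have hα := M.alpha_mem s(v, j) (by
        rw [SimpleGraph.mem_edgeSet]
        have := M.pa_adj j (M.ch_mem_ne_root hj)
        rwa [M.ch_mem_pa hj] at this)
      have hC : ∀ n, (0:ℝ) ≤ (Polynomial.C (alpha s(v,j)) * M.qP k j).coeff n :=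
        coeff_nonneg_mul (fun n => by
          rw [Polynomial.coeff_C]; split
          · exact hα.1
          · exact le_rfl) (ih j)
      rw [Polynomial.coeff_add, Polynomial.coeff_C]
      rcases Nat.eq_zero_or_pos m with rfl | hm
      · rw [if_pos rfl]
        have h1 : (0:ℝ) ≤ 1 - alpha s(v,j) := by linarith [hα.2]
        linarith [hC 0]
      · rw [if_neg (by omega), zero_add]
        exact hC m

lemma Q_coeff_nonneg (v : V) (n : ℕ) : 0 ≤ (M.Q v).coeff n := M.qP_coeff_nonneg _ v n

lemma qP_eval_one : ∀ (k : ℕ) (v : V), (M.qP k v).eval 1 = 1 := by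
  intro k
  induction k with
  | zero => intro v; simp [qP]
  | succ k ih =>
    intro v
    show (Polynomial.X * _).eval (1:ℝ) = 1
    rw [Polynomial.eval_mul, Polynomial.eval_X, one_mul, Polynomial.eval_prod]
    apply Finset.prod_eq_one
    intro j _
    simp [ih j]

lemma Q_eval_one (v : V) : (M.Q v).eval 1 = 1 := M.qP_eval_one _ v

lemma abs_Q_eval_le_one {t : ℝ} (ht : |t| ≤ 1) (v : V) : |(M.Q v).eval t| ≤ 1 := by
  have := abs_eval_le_eval_one (M.Q_coeff_nonneg v) ht
  rwa [M.Q_eval_one v] at this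

lemma Q_eval_eq_eta (η : ℝ → V → ℝ)
    (hη : ∀ (t : ℝ) (v : V), η t v
      = t * ∏ j ∈ Finset.univ.filter (fun j => j ≠ M.root ∧ M.pa j = v),
          (1 - alpha s(v, j) + alpha s(v, j) * η t j)) (t : ℝ) (v : V) :
    (M.Q v).eval t = η t v := by
  suffices h : ∀ (k : ℕ) (v : V), Fintype.card V - 1 ≤ k + M.dep v →
      (M.qP k v).eval t = η t v by
    rw [Q]; exact h _ v (by omega)
  intro k
  induction k with
  | zero =>
    intro v hv
    have hch : M.ch v = ∅ := M.ch_eq_empty (by omega)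
    rw [hη t v]
    show Polynomial.X.eval t = _
    rw [Polynomial.eval_X]
    have : Finset.univ.filter (fun j => j ≠ M.root ∧ M.pa j = v) = M.ch v := rfl
    rw [this, hch, Finset.prod_empty, mul_one]
  | succ k ih =>
    intro v hv
    rw [hη t v]
    show (Polynomial.X * _).eval t = _
    rw [Polynomial.eval_mul, Polynomial.eval_X, Polynomial.eval_prod]
    congr 1
    apply Finset.prod_congr rfl
    intro j hj
    rw [Polynomial.eval_add, Polynomial.eval_mul, Polynomial.eval_C, Polynomial.eval_C,
      ih j (by have := M.dep_child hj; omega)]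

lemma abs_eta_le_one (η : ℝ → V → ℝ)
    (hη : ∀ (t : ℝ) (v : V), η t v
      = t * ∏ j ∈ Finset.univ.filter (fun j => j ≠ M.root ∧ M.pa j = v),
          (1 - alpha s(v, j) + alpha s(v, j) * η t j)) {t : ℝ} (ht : |t| ≤ 1) (v : V) :
    |η t v| ≤ 1 := by
  rw [← M.Q_eval_eq_eta η hη t v]
  exact M.abs_Q_eval_le_one ht v

end MPMRF
open Polynomial in
lemma eval_one_derivative_prod {β : Type*} [DecidableEq β] {s : Finset β}
    {f : β → Polynomial ℝ} (h1 : ∀ j ∈ s, (f j).eval 1 = 1) :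
    (Polynomial.derivative (∏ j ∈ s, f j)).eval 1
      = ∑ j ∈ s, (Polynomial.derivative (f j)).eval 1 := by
  induction s using Finset.induction with
  | empty => simp
  | insert b s ha ih =>
    rw [Finset.prod_insert ha, Polynomial.derivative_mul, Polynomial.eval_add,
      Polynomial.eval_mul, Polynomial.eval_mul, Polynomial.eval_prod]
    rw [Finset.prod_eq_one (fun j hj => h1 j (Finset.mem_insert_of_mem hj)),
      h1 b (Finset.mem_insert_self _ _), mul_one, one_mul,
      ih (fun j hj => h1 j (Finset.mem_insert_of_mem hj)), Finset.sum_insert ha]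

namespace MPMRF
variable {V : Type} [Fintype V] [DecidableEq V]
    {G : SimpleGraph V} {lam : ℝ} {alpha : Sym2 V → ℝ}
    {Ω : Type} [MeasureSpace Ω]
    (M : MPMRF G lam alpha Ω)

/-- the mean of the secondary pgf at a vertex -/
noncomputable def mQ (v : V) : ℝ := (Polynomial.derivative (M.Q v)).eval 1

include M

lemma mQ_rec (v : V) : M.mQ v = 1 + ∑ j ∈ M.ch v, alpha s(v, j) * M.mQ j := by
  rw [mQ]
  conv_lhs => rw [M.Q_eq v]
  rw [Polynomial.derivative_mul, Polynomial.derivative_X, Polynomial.eval_add,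
    Polynomial.eval_mul, Polynomial.eval_mul, Polynomial.eval_one, Polynomial.eval_X,
    one_mul, one_mul, Polynomial.eval_prod]
  have hfac : ∀ j ∈ M.ch v,
      (Polynomial.C (1 - alpha s(v,j)) + Polynomial.C (alpha s(v,j)) * M.Q j).eval 1 = 1 := by
    intro j _
    rw [Polynomial.eval_add, Polynomial.eval_mul, Polynomial.eval_C, Polynomial.eval_C,
      M.Q_eval_one j]
    ring
  rw [Finset.prod_eq_one hfac, eval_one_derivative_prod hfac]
  congr 1
  apply Finset.sum_congr rfl
  intro j _
  rw [Polynomial.derivative_add, Polynomial.derivative_C, Polynomial.derivative_C_mul,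
    Polynomial.eval_add, Polynomial.eval_zero, Polynomial.eval_mul, Polynomial.eval_C,
    zero_add, mQ]

lemma sum_ch_eq (f : V → ℝ) :
    ∑ v, ∑ j ∈ M.ch v, f j = ∑ j ∈ Finset.univ.filter (· ≠ M.root), f j := by
  have key := Finset.sum_fiberwise_of_maps_to
    (s := Finset.univ.filter (· ≠ M.root)) (t := Finset.univ) (g := M.pa)
    (fun i _ => Finset.mem_univ (M.pa i)) f
  rw [← key]
  apply Finset.sum_congr rfl
  intro v _
  apply Finset.sum_congr _ (fun _ _ => rfl)
  ext j
  simp only [ch, Finset.mem_filter, Finset.mem_univ, true_and, and_comm]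

lemma sum_one_sub_a_mul_mQ : ∑ v, (1 - M.a v) * M.mQ v = Fintype.card V := by
  have h1 : ∑ v, M.mQ v = Fintype.card V + ∑ v, M.a v * M.mQ v := by
    calc ∑ v, M.mQ v = ∑ v : V, (1 + ∑ j ∈ M.ch v, alpha s(v, j) * M.mQ j) :=
          Finset.sum_congr rfl fun v _ => M.mQ_rec v
      _ = Fintype.card V + ∑ v : V, ∑ j ∈ M.ch v, alpha s(v, j) * M.mQ j := by
          rw [Finset.sum_add_distrib]; simp [Finset.card_univ]
      _ = Fintype.card V + ∑ v : V, ∑ j ∈ M.ch v, M.a j * M.mQ j := by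
          congr 1
          exact Finset.sum_congr rfl fun v _ => Finset.sum_congr rfl
            fun j hj => by rw [M.a_child hj]
      _ = Fintype.card V + ∑ j ∈ Finset.univ.filter (· ≠ M.root), M.a j * M.mQ j := by
          rw [M.sum_ch_eq]
      _ = Fintype.card V + ∑ v, M.a v * M.mQ v := by
          congr 1
          have hfe : Finset.univ.filter (· ≠ M.root) = Finset.univ.erase M.root := by
            ext x; simp [Finset.mem_erase, and_comm]
          have haroot : M.a M.root * M.mQ M.root = 0 := by
            rw [a, if_pos rfl, zero_mul]
          rw [hfe, ← Finset.sum_erase_add Finset.univ _ (Finset.mem_univ M.root), haroot,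
            add_zero]
  have h2 : ∑ v, (1 - M.a v) * M.mQ v = ∑ v, M.mQ v - ∑ v, M.a v * M.mQ v := by
    rw [← Finset.sum_sub_distrib]
    exact Finset.sum_congr rfl fun v _ => by ring
  rw [h2, h1]
  ring

end MPMRF
namespace MPMRF
variable {V : Type} [Fintype V] [DecidableEq V]
    {G : SimpleGraph V} [DecidableRel G.Adj] {lam : ℝ} {alpha : Sym2 V → ℝ}
    {Ω : Type} [MeasureSpace Ω]
    (M : MPMRF G lam alpha Ω)

include M

lemma part3 (η : ℝ → V → ℝ)
    (hη : ∀ (t : ℝ) (v : V), η t v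
      = t * ∏ j ∈ Finset.univ.filter (fun j => j ≠ M.root ∧ M.pa j = v),
          (1 - alpha s(v, j) + alpha s(v, j) * η t j)) :
    (∃ p : ℕ → ℝ, (∀ k, 0 ≤ p k) ∧ (∑' k : ℕ, p k) = 1
        ∧ (∀ t ∈ Set.Icc (-1 : ℝ) 1,
            (∑' k : ℕ, p k * t ^ k)
              = ∑ v : V,
                  ((1 - if v = M.root then 0 else alpha s(M.pa v, v))
                      / ((Fintype.card V : ℝ) - ∑ e ∈ G.edgeFinset, alpha e))
                    * η t v)
        ∧ (∑' k : ℕ, (k : ℝ) * p k)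
            = (Fintype.card V : ℝ)
              / ((Fintype.card V : ℝ) - ∑ e ∈ G.edgeFinset, alpha e)) := by
  classical
  set D : ℝ := (Fintype.card V : ℝ) - ∑ e ∈ G.edgeFinset, alpha e with hD
  have hDpos : 0 < D := M.D_pos
  set w : V → ℝ := fun v => (1 - M.a v) / D with hw
  have hsumD : ∑ v, (1 - M.a v) = D := by
    rw [hD, M.sum_alpha_edges, Finset.sum_sub_distrib]
    simp [Finset.card_univ]
  set K : ℕ := (Finset.univ.sup fun v => (M.Q v).natDegree) + 1 with hK
  have hdeg : ∀ v, (M.Q v).natDegree < K := by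
    intro v
    have : (M.Q v).natDegree ≤ Finset.univ.sup fun v => (M.Q v).natDegree :=
      Finset.le_sup (f := fun v => (M.Q v).natDegree) (Finset.mem_univ v)
    omega
  refine ⟨fun k => ∑ v, w v * (M.Q v).coeff k, ?_, ?_, ?_, ?_⟩
  · intro k
    apply Finset.sum_nonneg
    intro v _
    apply mul_nonneg _ (M.Q_coeff_nonneg v k)
    apply div_nonneg _ (le_of_lt hDpos)
    have := (M.a_mem v).2
    linarith
  · rw [tsum_eq_sum (s := Finset.range K) (fun k hk => by
      apply Finset.sum_eq_zero
      intro v _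
      rw [Polynomial.coeff_eq_zero_of_natDegree_lt
        (lt_of_lt_of_le (hdeg v) (le_of_not_gt (fun h => hk (Finset.mem_range.2 h)))),
        mul_zero])]
    rw [Finset.sum_comm]
    have : ∀ v ∈ Finset.univ, ∑ k ∈ Finset.range K, w v * (M.Q v).coeff k = w v := by
      intro v _
      rw [← Finset.mul_sum]
      have he : (M.Q v).eval 1 = ∑ i ∈ Finset.range K, (M.Q v).coeff i * 1 ^ i :=
        Polynomial.eval_eq_sum_range' (hdeg v) 1
      simp only [one_pow, mul_one] at he
      rw [← he, M.Q_eval_one v, mul_one]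
    rw [Finset.sum_congr rfl this, hw, ← Finset.sum_div, hsumD, div_self (ne_of_gt hDpos)]
  · intro t _
    beta_reduce
    rw [tsum_eq_sum (s := Finset.range K) (fun k hk => by
      beta_reduce
      rw [Finset.sum_eq_zero (fun v _ => by
        rw [Polynomial.coeff_eq_zero_of_natDegree_lt
          (lt_of_lt_of_le (hdeg v) (le_of_not_gt (fun h => hk (Finset.mem_range.2 h)))),
          mul_zero]), zero_mul])]
    have : ∀ k ∈ Finset.range K, (∑ v, w v * (M.Q v).coeff k) * t ^ k
        = ∑ v, w v * ((M.Q v).coeff k * t ^ k) := by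
      intro k _
      rw [Finset.sum_mul]
      exact Finset.sum_congr rfl fun v _ => by ring
    rw [Finset.sum_congr rfl this, Finset.sum_comm]
    apply Finset.sum_congr rfl
    intro v _
    rw [← Finset.mul_sum]
    have he : (M.Q v).eval t = ∑ i ∈ Finset.range K, (M.Q v).coeff i * t ^ i :=
      Polynomial.eval_eq_sum_range' (hdeg v) t
    rw [← he, M.Q_eval_eq_eta η hη t v]
    rfl
  · beta_reduce
    rw [tsum_eq_sum (s := Finset.range (K+1)) (fun k hk => by
      beta_reduce
      rw [Finset.sum_eq_zero (fun v _ => by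
        rw [Polynomial.coeff_eq_zero_of_natDegree_lt
          (lt_of_lt_of_le (hdeg v) (by
            have : ¬ k < K + 1 := fun h => hk (Finset.mem_range.2 h)
            omega)), mul_zero]), mul_zero])]
    have hswap : ∀ k ∈ Finset.range (K+1), (k:ℝ) * ∑ v, w v * (M.Q v).coeff k
        = ∑ v, w v * ((k:ℝ) * (M.Q v).coeff k) := by
      intro k _
      rw [Finset.mul_sum]
      exact Finset.sum_congr rfl fun v _ => by ring
    rw [Finset.sum_congr rfl hswap, Finset.sum_comm]
    have hm : ∀ v ∈ Finset.univ,
        ∑ k ∈ Finset.range (K+1), w v * ((k:ℝ) * (M.Q v).coeff k) = w v * M.mQ v := by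
      intro v _
      rw [← Finset.mul_sum]
      congr 1
      have hdd : (Polynomial.derivative (M.Q v)).natDegree < K :=
        lt_of_le_of_lt (le_trans (Polynomial.natDegree_derivative_le _)
          (Nat.sub_le _ _)) (hdeg v)
      have he : M.mQ v
          = ∑ i ∈ Finset.range K, (Polynomial.derivative (M.Q v)).coeff i * 1 ^ i := by
        rw [mQ]; exact Polynomial.eval_eq_sum_range' hdd 1
      simp only [one_pow, mul_one, Polynomial.coeff_derivative] at he
      rw [he, Finset.sum_range_succ']
      push_cast
      simp only [Nat.cast_zero, zero_mul, add_zero]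
      apply Finset.sum_congr rfl
      intro i _
      push_cast
      ring
    rw [Finset.sum_congr rfl hm]
    have : ∑ v, w v * M.mQ v = (∑ v, (1 - M.a v) * M.mQ v) / D := by
      rw [Finset.sum_div]
      exact Finset.sum_congr rfl fun v _ => by rw [hw]; ring
    rw [this, M.sum_one_sub_a_mul_mQ]

end MPMRF
namespace MPMRF
variable {V : Type} [Fintype V] [DecidableEq V]
    {G : SimpleGraph V} {lam : ℝ} {alpha : Sym2 V → ℝ}
    {Ω : Type} [MeasureSpace Ω]
    (M : MPMRF G lam alpha Ω)

/-- the joint family of innovations and thinning indicators -/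
def X (M : MPMRF G lam alpha Ω) : V ⊕ (V × ℕ) → Ω → ℕ :=
  Sum.elim M.L (fun p : V × ℕ => M.I p.1 p.2)

/-- the vertex an index belongs to -/
def vOf : V ⊕ (V × ℕ) → V := Sum.elim id Prod.fst

/-- all indices attached to a set of vertices -/
def idx (s : Finset V) : Set (V ⊕ (V × ℕ)) := {i | vOf i ∈ s}

/-- the sigma-algebra generated by the variables indexed by `S` -/
def mS (M : MPMRF G lam alpha Ω) (S : Set (V ⊕ (V × ℕ))) : MeasurableSpace Ω :=
  ⨆ i ∈ S, MeasurableSpace.comap (M.X i) inferInstance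

lemma idx_disjoint {s t : Finset V} (h : Disjoint s t) : Disjoint (idx s) (idx t) := by
  rw [Set.disjoint_left]
  intro i hi hi'
  exact Finset.disjoint_left.1 h hi hi'

lemma idx_mono {s t : Finset V} (h : s ⊆ t) : idx s ⊆ idx t := fun i hi => h hi

include M

lemma meas_X : ∀ i, Measurable (M.X i) := by
  rintro (v | p)
  · exact M.meas_L v
  · exact M.meas_I p.1 p.2

lemma mS_le (S : Set (V ⊕ (V × ℕ))) : M.mS S ≤ (inferInstance : MeasurableSpace Ω) := by
  apply iSup₂_le
  intro i _
  exact (M.meas_X i).comap_le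

lemma mS_mono {S T : Set (V ⊕ (V × ℕ))} (h : S ⊆ T) : M.mS S ≤ M.mS T := by
  apply iSup₂_le
  intro i hi
  exact le_iSup₂ (f := fun i _ => MeasurableSpace.comap (M.X i) inferInstance) i (h hi)

lemma meas_X_mS {S : Set (V ⊕ (V × ℕ))} {i} (hi : i ∈ S) : Measurable[M.mS S] (M.X i) := by
  apply Measurable.mono (Measurable.of_comap_le le_rfl)
    (le_iSup₂ (f := fun i _ => MeasurableSpace.comap (M.X i) inferInstance) i hi) le_rfl

lemma meas_of_mS {S : Set (V ⊕ (V × ℕ))} {β : Type*} [MeasurableSpace β] {f : Ω → β}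
    (hf : Measurable[M.mS S] f) : Measurable f :=
  hf.mono (M.mS_le S) le_rfl

lemma indep_mS {S T : Set (V ⊕ (V × ℕ))} (h : Disjoint S T) :
    Indep (M.mS S) (M.mS T) ℙ :=
  indep_iSup_of_disjoint (fun i => (M.meas_X i).comap_le) M.indep.iIndep h

omit M in
lemma integrable_of_bounded_one {f : Ω → ℝ} [IsProbabilityMeasure (ℙ : Measure Ω)]
    (hm : Measurable f) (hb : ∀ ω, |f ω| ≤ 1) : Integrable f ℙ :=
  ⟨hm.aestronglyMeasurable, HasFiniteIntegral.of_bounded (C := 1) (ae_of_all _ hb)⟩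

lemma integral_mul_of_indep [IsProbabilityMeasure (ℙ : Measure Ω)]
    {S T : Set (V ⊕ (V × ℕ))} (hST : Disjoint S T) {f g : Ω → ℝ}
    (hf : Measurable[M.mS S] f) (hg : Measurable[M.mS T] g)
    (hbf : ∀ ω, |f ω| ≤ 1) (hbg : ∀ ω, |g ω| ≤ 1) :
    ∫ ω, f ω * g ω = (∫ ω, f ω) * ∫ ω, g ω := by
  have hfg : IndepFun f g ℙ := by
    rw [IndepFun_iff_Indep]
    exact indep_of_indep_of_le_right
      (indep_of_indep_of_le_left (M.indep_mS hST) hf.comap_le) hg.comap_le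
  exact IndepFun.integral_fun_mul_eq_mul_integral hfg
    (integrable_of_bounded_one (M.meas_of_mS hf) hbf).aestronglyMeasurable
    (integrable_of_bounded_one (M.meas_of_mS hg) hbg).aestronglyMeasurable

lemma integral_prod_indep [IsProbabilityMeasure (ℙ : Measure Ω)]
    {β : Type*} [DecidableEq β] (s : Finset β) (S : β → Set (V ⊕ (V × ℕ)))
    (hd : ∀ i ∈ s, ∀ j ∈ s, i ≠ j → Disjoint (S i) (S j))
    (F : β → Ω → ℝ) (hm : ∀ j ∈ s, Measurable[M.mS (S j)] (F j))
    (hb : ∀ j ∈ s, ∀ ω, |F j ω| ≤ 1) :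
    ∫ ω, ∏ j ∈ s, F j ω = ∏ j ∈ s, ∫ ω, F j ω := by
  induction s using Finset.induction with
  | empty => simp
  | insert b s ha ih =>
    have hrest : Measurable[M.mS (⋃ j ∈ s, S j)] fun ω => ∏ j ∈ s, F j ω := by
      apply Finset.measurable_prod
      intro j hj
      exact (hm j (Finset.mem_insert_of_mem hj)).mono
        (M.mS_mono (Set.subset_biUnion_of_mem hj)) le_rfl
    have hdisj : Disjoint (S b) (⋃ j ∈ s, S j) := by
      rw [Set.disjoint_iUnion₂_right]
      intro j hj
      exact hd b (Finset.mem_insert_self _ _) j (Finset.mem_insert_of_mem hj)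
        (fun h => ha (h ▸ hj))
    have hbrest : ∀ ω, |∏ j ∈ s, F j ω| ≤ 1 := by
      intro ω
      rw [Finset.abs_prod]
      apply Finset.prod_le_one (fun j _ => abs_nonneg _)
      intro j hj
      exact hb j (Finset.mem_insert_of_mem hj) ω
    calc ∫ ω, ∏ j ∈ insert b s, F j ω = ∫ ω, F b ω * ∏ j ∈ s, F j ω := by
          congr 1; funext ω; rw [Finset.prod_insert ha]
      _ = (∫ ω, F b ω) * ∫ ω, ∏ j ∈ s, F j ω :=
          M.integral_mul_of_indep hdisj (hm b (Finset.mem_insert_self _ _)) hrest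
            (hb b (Finset.mem_insert_self _ _)) hbrest
      _ = ∏ j ∈ insert b s, ∫ ω, F j ω := by
          rw [Finset.prod_insert ha,
            ih (fun i hi j hj hij => hd i (Finset.mem_insert_of_mem hi) j
              (Finset.mem_insert_of_mem hj) hij)
              (fun j hj => hm j (Finset.mem_insert_of_mem hj))
              (fun j hj => hb j (Finset.mem_insert_of_mem hj))]

omit M in
lemma measurable_nat_comp {m : MeasurableSpace Ω} {R : Ω → ℕ} (hR : Measurable[m] R)
    {F : ℕ → Ω → ℕ} (hF : ∀ n, Measurable[m] (F n)) :
    Measurable[m] fun ω => F (R ω) ω := by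
  apply measurable_to_countable'
  intro y
  have : (fun ω => F (R ω) ω) ⁻¹' {y} = ⋃ n, (R ⁻¹' {n}) ∩ (F n ⁻¹' {y}) := by
    ext ω
    simp only [Set.mem_preimage, Set.mem_singleton_iff, Set.mem_iUnion, Set.mem_inter_iff]
    constructor
    · intro h; exact ⟨R ω, rfl, h⟩
    · rintro ⟨n, hn, h⟩; rw [hn]; exact h
  rw [this]
  exact MeasurableSet.iUnion fun n =>
    (hR (measurableSet_singleton n)).inter (hF n (measurableSet_singleton y))

omit M in
lemma measurable_pow_nat {m : MeasurableSpace Ω} {g : Ω → ℕ} (hg : Measurable[m] g) (t : ℝ) :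
    Measurable[m] fun ω => t ^ g ω :=
  Measurable.comp (measurable_from_top (f := fun n : ℕ => t ^ n)) hg

omit M in
lemma abs_pow_le_one {t : ℝ} (ht : |t| ≤ 1) (n : ℕ) : |t ^ n| ≤ 1 := by
  rw [abs_pow]
  exact pow_le_one₀ (abs_nonneg t) ht

omit M in
/-- partition of an integral along the fibers of an ℕ-valued random variable -/
lemma integral_partition [IsProbabilityMeasure (ℙ : Measure Ω)]
    {R : Ω → ℕ} (hR : Measurable R) {f : Ω → ℝ} (hf : Integrable f ℙ) :
    ∫ ω, f ω = ∑' m : ℕ, ∫ ω in R ⁻¹' {m}, f ω := by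
  have hu : ⋃ m : ℕ, R ⁻¹' {m} = Set.univ := by
    ext ω; simp
  have h1 : ∫ ω, f ω = ∫ ω in ⋃ m : ℕ, R ⁻¹' {m}, f ω := by
    rw [hu, setIntegral_univ]
  rw [h1, integral_iUnion (fun m => hR (measurableSet_singleton m))
    (fun m m' hmm' => Set.disjoint_left.2 (fun ω h1 h2 => by
      simp only [Set.mem_preimage, Set.mem_singleton_iff] at h1 h2
      exact hmm' (h1 ▸ h2 ▸ rfl)))
    (hf.integrableOn.mono_set (Set.subset_univ _) |>.mono_set (by rw [hu]))]

omit M in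
/-- pgf as a pmf sum -/
lemma tsum_pmf_eq_integral_pow [IsProbabilityMeasure (ℙ : Measure Ω)]
    {R : Ω → ℕ} (hR : Measurable R) {s : ℝ} (hs : |s| ≤ 1) :
    ∑' m : ℕ, (ℙ (R ⁻¹' {m})).toReal * s ^ m = ∫ ω, s ^ R ω := by
  rw [integral_partition hR (integrable_of_bounded_one
    (measurable_pow_nat hR s) (fun ω => abs_pow_le_one hs _))]
  apply tsum_congr
  intro m
  rw [setIntegral_congr_fun (hR (measurableSet_singleton m))
    (fun ω hω => by
      simp only [Set.mem_preimage, Set.mem_singleton_iff] at hω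
      show s ^ R ω = s ^ m
      rw [hω]),
    setIntegral_const, smul_eq_mul, measureReal_def]

end MPMRF
namespace MPMRF
variable {V : Type} [Fintype V] [DecidableEq V]
    {G : SimpleGraph V} {lam : ℝ} {alpha : Sym2 V → ℝ}
    {Ω : Type} [MeasureSpace Ω] [IsProbabilityMeasure (ℙ : Measure Ω)]
    (M : MPMRF G lam alpha Ω)

/-- one thinning-innovation step fed with `n` particles -/
def Rv (M : MPMRF G lam alpha Ω) (v : V) (n : ℕ) (ω : Ω) : ℕ :=
  if v = M.root then M.L v ω else (∑ i ∈ Finset.range n, M.I v i ω) + M.L v ω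

/-- total subtree count below `v` (with fuel `k`) fed with `n` particles at the parent -/
def TF (M : MPMRF G lam alpha Ω) : ℕ → V → ℕ → Ω → ℕ
  | 0, v, n, ω => M.Rv v n ω
  | (k+1), v, n, ω => M.Rv v n ω + ∑ j ∈ M.ch v, M.TF k j (M.Rv v n ω) ω

include M

lemma Rv_eq_N (v : V) (n : ℕ) (ω : Ω) (h : v = M.root ∨ n = M.N (M.pa v) ω) :
    M.Rv v n ω = M.N v ω := by
  rcases h with h | h
  · rw [Rv, if_pos h, h, M.N_root]
  · by_cases hv : v = M.root
    · rw [Rv, if_pos hv, hv, M.N_root]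
    · rw [Rv, if_neg hv, h, ← M.N_rec v hv ω]

lemma TF_eq_sum_N : ∀ (k : ℕ) (v : V) (n : ℕ) (ω : Ω),
    (v = M.root ∨ n = M.N (M.pa v) ω) →
    M.TF k v n ω = ∑ u ∈ M.subF k v, M.N u ω := by
  intro k
  induction k with
  | zero =>
    intro v n ω h
    show M.Rv v n ω = _
    rw [M.Rv_eq_N v n ω h]
    simp
  | succ k ih =>
    intro v n ω h
    show M.Rv v n ω + ∑ j ∈ M.ch v, M.TF k j (M.Rv v n ω) ω = _
    rw [M.sum_subF_succ, M.Rv_eq_N v n ω h]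
    congr 1
    apply Finset.sum_congr rfl
    intro j hj
    apply ih j _ ω
    right
    rw [M.ch_mem_pa hj]

lemma meas_Rv_mS (v : V) (n : ℕ) : Measurable[M.mS (idx {v})] (M.Rv v n) := by
  have hL : Measurable[M.mS (idx {v})] (M.L v) :=
    M.meas_X_mS (S := idx {v}) (i := Sum.inl v) (by simp [idx, vOf])
  have hI : ∀ i, Measurable[M.mS (idx {v})] (M.I v i) := fun i =>
    M.meas_X_mS (S := idx {v}) (i := Sum.inr (v, i)) (by simp [idx, vOf])
  unfold Rv
  split
  · exact hL
  · exact (Finset.measurable_sum _ (fun i _ => hI i)).add hL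

lemma meas_Rv (v : V) (n : ℕ) : Measurable (M.Rv v n) := M.meas_of_mS (M.meas_Rv_mS v n)

lemma meas_TF_mS : ∀ (k : ℕ) (v : V) (n : ℕ),
    Measurable[M.mS (idx (M.subF k v))] (M.TF k v n) := by
  intro k
  induction k with
  | zero =>
    intro v n
    show Measurable[M.mS (idx (M.subF 0 v))] (M.Rv v n)
    exact (M.meas_Rv_mS v n).mono (M.mS_mono (idx_mono (by simp))) le_rfl
  | succ k ih =>
    intro v n
    show Measurable[M.mS (idx (M.subF (k+1) v))]
      fun ω => M.Rv v n ω + ∑ j ∈ M.ch v, M.TF k j (M.Rv v n ω) ω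
    have hsub : idx {v} ⊆ idx (M.subF (k+1) v) :=
      idx_mono (Finset.singleton_subset_iff.2 (M.mem_subF_self _ _))
    have hR : Measurable[M.mS (idx (M.subF (k+1) v))] (M.Rv v n) :=
      (M.meas_Rv_mS v n).mono (M.mS_mono hsub) le_rfl
    apply Measurable.add hR
    apply Finset.measurable_sum
    intro j hj
    have hTF : ∀ m, Measurable[M.mS (idx (M.subF (k+1) v))] (M.TF k j m) := fun m =>
      (ih j m).mono (M.mS_mono (idx_mono (fun u hu => M.mem_subF_of_child hj hu))) le_rfl
    exact measurable_nat_comp hR hTF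

lemma meas_TF (k : ℕ) (v : V) (n : ℕ) : Measurable (M.TF k v n) :=
  M.meas_of_mS (M.meas_TF_mS k v n)

omit M in
lemma poissonProb_nonneg {mu : ℝ} (hmu : 0 ≤ mu) (k : ℕ) : 0 ≤ poissonProb mu k := by
  unfold poissonProb
  positivity

omit M in
lemma tsum_poisson_pgf {mu : ℝ} (hmu : 0 ≤ mu) (s : ℝ) :
    ∑' m : ℕ, poissonProb mu m * s ^ m = Real.exp (mu * (s - 1)) := by
  have h1 : ∀ m : ℕ, poissonProb mu m * s ^ m
      = Real.exp (-mu) * ((mu * s) ^ m / (Nat.factorial m)) := by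
    intro m
    unfold poissonProb
    rw [mul_pow]
    ring
  rw [tsum_congr h1, tsum_mul_left]
  have h2 : ∑' m : ℕ, (mu * s) ^ m / (Nat.factorial m) = Real.exp (mu * s) := by
    rw [Real.exp_eq_exp_ℝ, NormedSpace.exp_eq_tsum_div]
  rw [h2, ← Real.exp_add]
  ring_nf

lemma pgf_L (v : V) {s : ℝ} (hs : |s| ≤ 1) :
    ∫ ω, s ^ M.L v ω = Real.exp (lam * (1 - M.a v) * (s - 1)) := by
  have hmu : 0 ≤ lam * (1 - M.a v) := by
    have h1 := (M.a_mem v).2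
    have := M.lam_pos
    nlinarith
  have hpmf : ∀ m : ℕ, (ℙ (M.L v ⁻¹' {m})).toReal = poissonProb (lam * (1 - M.a v)) m := by
    intro m
    have hset : M.L v ⁻¹' {m} = {ω | M.L v ω = m} := by ext ω; simp
    by_cases hv : v = M.root
    · rw [hset]
      subst hv
      rw [M.L_root_poisson m, ENNReal.toReal_ofReal
        (poissonProb_nonneg (le_of_lt M.lam_pos) m)]
      congr 2
      rw [a, if_pos rfl]
      ring
    · rw [hset, M.L_poisson v hv m, ENNReal.toReal_ofReal (poissonProb_nonneg (by
        have h1 := (M.alpha_pa_mem hv).2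
        have := M.lam_pos
        nlinarith) m)]
      congr 2
      rw [a, if_neg hv]
  rw [← tsum_pmf_eq_integral_pow (M.meas_L v) hs, tsum_congr (fun m => by rw [hpmf m]),
    tsum_poisson_pgf hmu s]

lemma pgf_I {v : V} (hv : v ≠ M.root) (i : ℕ) {s : ℝ} (hs : |s| ≤ 1) :
    ∫ ω, s ^ M.I v i ω = 1 - M.a v + M.a v * s := by
  set av := alpha s(M.pa v, v) with hav
  have hmem := M.alpha_pa_mem hv
  have hA : MeasurableSet {ω | M.I v i ω = 1} := by
    have : {ω | M.I v i ω = 1} = M.I v i ⁻¹' {1} := by ext ω; simp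
    rw [this]
    exact M.meas_I v i (measurableSet_singleton 1)
  have hint : Integrable (fun ω => s ^ M.I v i ω) ℙ :=
    integrable_of_bounded_one (measurable_pow_nat (M.meas_I v i) s)
      (fun ω => abs_pow_le_one hs _)
  rw [← integral_add_compl hA hint]
  have h1 : ∫ ω in {ω | M.I v i ω = 1}, s ^ M.I v i ω = av * s := by
    rw [setIntegral_congr_fun hA (fun ω hω => by
      show s ^ M.I v i ω = s
      rw [Set.mem_setOf_eq] at hω
      rw [hω, pow_one]), setIntegral_const, smul_eq_mul, measureReal_def, M.I_bern v hv i,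
      ENNReal.toReal_ofReal hmem.1]
  have h2 : ∫ ω in {ω | M.I v i ω = 1}ᶜ, s ^ M.I v i ω = 1 - av := by
    rw [setIntegral_congr_fun hA.compl (fun ω hω => by
      show s ^ M.I v i ω = 1
      simp only [Set.mem_compl_iff, Set.mem_setOf_eq] at hω
      have := M.I_le_one v i ω
      have h0 : M.I v i ω = 0 := by omega
      rw [h0, pow_zero]), setIntegral_const, smul_eq_mul, mul_one, measureReal_def,
      prob_compl_eq_one_sub hA, M.I_bern v hv i, ENNReal.toReal_sub_of_le
        (ENNReal.ofReal_le_one.2 hmem.2) ENNReal.one_ne_top, ENNReal.toReal_one,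
      ENNReal.toReal_ofReal hmem.1]
  rw [h1, h2, a, if_neg hv, ← hav]
  ring

lemma pgf_Rv (v : V) (n : ℕ) {s : ℝ} (hs : |s| ≤ 1) :
    ∫ ω, s ^ M.Rv v n ω
      = (1 - M.a v + M.a v * s) ^ n * Real.exp (lam * (1 - M.a v) * (s - 1)) := by
  by_cases hv : v = M.root
  · have ha : M.a v = 0 := by rw [a, if_pos hv]
    have hRv : M.Rv v n = M.L v := by funext ω; rw [Rv, if_pos hv]
    rw [hRv, M.pgf_L v hs, ha]
    norm_num
  · induction n with
    | zero =>
      have hRv : M.Rv v 0 = M.L v := by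
        funext ω; rw [Rv, if_neg hv]; simp
      rw [hRv, M.pgf_L v hs, pow_zero, one_mul]
    | succ n ih =>
      have hsplit : ∀ ω, s ^ M.Rv v (n+1) ω = s ^ M.I v n ω * s ^ M.Rv v n ω := by
        intro ω
        rw [Rv, Rv, if_neg hv, if_neg hv, Finset.sum_range_succ, ← pow_add]
        congr 1
        ring
      have hS : Disjoint ({Sum.inr (v, n)} : Set (V ⊕ (V × ℕ)))
          ({Sum.inl v} ∪ (fun i => Sum.inr (v, i)) '' {i | i < n}) := by
        rw [Set.disjoint_left]
        rintro x hx hx'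
        rw [Set.mem_singleton_iff] at hx
        subst hx
        rcases hx' with h | ⟨i, hi, h⟩
        · simp at h
        · rw [Set.mem_setOf_eq] at hi
          have hin : i = n := by
            have h2 := Sum.inr.inj h
            exact ((Prod.mk.injEq _ _ _ _ ▸ h2).2.symm).symm
          omega
      set T : Set (V ⊕ (V × ℕ)) := {Sum.inl v} ∪ (fun i => Sum.inr (v, i)) '' {i | i < n}
        with hT
      have hmL : Measurable[M.mS T] (M.L v) :=
        M.meas_X_mS (S := T) (i := Sum.inl v) (Or.inl rfl)
      have hmI : ∀ i, i < n → Measurable[M.mS T] (M.I v i) := fun i hi =>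
        M.meas_X_mS (S := T) (i := Sum.inr (v, i)) (Or.inr ⟨i, hi, rfl⟩)
      have hmRv : Measurable[M.mS T] (M.Rv v n) := by
        have : M.Rv v n = fun ω => (∑ i ∈ Finset.range n, M.I v i ω) + M.L v ω := by
          funext ω; rw [Rv, if_neg hv]
        rw [this]
        exact (Finset.measurable_sum _ (fun i hi =>
          hmI i (Finset.mem_range.1 hi))).add hmL
      have hmIn : Measurable[M.mS ({Sum.inr (v, n)} : Set (V ⊕ (V × ℕ)))] (M.I v n) :=
        M.meas_X_mS (S := {Sum.inr (v, n)}) (i := Sum.inr (v, n)) rfl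
      calc ∫ ω, s ^ M.Rv v (n+1) ω
          = ∫ ω, s ^ M.I v n ω * s ^ M.Rv v n ω := by
            apply integral_congr_ae
            exact ae_of_all _ hsplit
        _ = (∫ ω, s ^ M.I v n ω) * ∫ ω, s ^ M.Rv v n ω :=
            M.integral_mul_of_indep hS (measurable_pow_nat hmIn s)
              (measurable_pow_nat hmRv s) (fun ω => abs_pow_le_one hs _)
              (fun ω => abs_pow_le_one hs _)
        _ = (1 - M.a v + M.a v * s) ^ (n+1) * Real.exp (lam * (1 - M.a v) * (s - 1)) := by
            rw [M.pgf_I hv n hs, ih, pow_succ]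
            ring

end MPMRF
namespace MPMRF
variable {V : Type} [Fintype V] [DecidableEq V]
    {G : SimpleGraph V} {lam : ℝ} {alpha : Sym2 V → ℝ}
    {Ω : Type} [MeasureSpace Ω] [IsProbabilityMeasure (ℙ : Measure Ω)]
    (M : MPMRF G lam alpha Ω)

include M

lemma pgf_TF (η : ℝ → V → ℝ)
    (hη : ∀ (t : ℝ) (v : V), η t v
      = t * ∏ j ∈ Finset.univ.filter (fun j => j ≠ M.root ∧ M.pa j = v),
          (1 - alpha s(v, j) + alpha s(v, j) * η t j)) {t : ℝ} (ht : |t| ≤ 1) :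
    ∀ (k : ℕ) (v : V), Fintype.card V - 1 ≤ k + M.dep v → ∀ (n : ℕ),
    ∫ ω, t ^ M.TF k v n ω
      = (1 - M.a v + M.a v * η t v) ^ n
        * Real.exp (lam * ∑ u ∈ M.subF k v, (1 - M.a u) * (η t u - 1)) := by
  intro k
  induction k with
  | zero =>
    intro v hv n
    have hch : M.ch v = ∅ := M.ch_eq_empty (by omega)
    have hηv : η t v = t := by
      rw [hη t v]
      have hfil : Finset.univ.filter (fun j => j ≠ M.root ∧ M.pa j = v) = M.ch v := rfl
      rw [hfil, hch, Finset.prod_empty, mul_one]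
    show ∫ ω, t ^ M.Rv v n ω = _
    rw [M.pgf_Rv v n ht, subF_zero, Finset.sum_singleton, hηv]
    congr 1
    ring
  | succ k ih =>
    intro v hv n
    set ψ : V → ℝ := fun j => 1 - M.a j + M.a j * η t j with hψ
    have hψ_abs : ∀ j ∈ M.ch v, |ψ j| ≤ 1 := by
      intro j hj
      have hmem := M.a_mem j
      have hetaj := M.abs_eta_le_one η hη ht j
      show |1 - M.a j + M.a j * η t j| ≤ 1
      rw [abs_le] at hetaj ⊢
      have h1 : M.a j * η t j ≤ M.a j * 1 :=
        mul_le_mul_of_nonneg_left hetaj.2 hmem.1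
      have h2 : M.a j * (-1) ≤ M.a j * η t j :=
        mul_le_mul_of_nonneg_left hetaj.1 hmem.1
      constructor <;> nlinarith [hmem.1, hmem.2]
    have hs : |t * ∏ j ∈ M.ch v, ψ j| ≤ 1 := by
      rw [abs_mul, Finset.abs_prod]
      have h1 : ∏ j ∈ M.ch v, |ψ j| ≤ 1 :=
        Finset.prod_le_one (fun j _ => abs_nonneg _) (fun j hj => hψ_abs j hj)
      have h2 : (0:ℝ) ≤ ∏ j ∈ M.ch v, |ψ j| :=
        Finset.prod_nonneg (fun j _ => abs_nonneg _)
      nlinarith [abs_nonneg t]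
    have hηv : η t v = t * ∏ j ∈ M.ch v, ψ j := by
      rw [hη t v]
      congr 1
      apply Finset.prod_congr rfl
      intro j hj
      show _ = 1 - M.a j + M.a j * η t j
      rw [M.a_child hj]
    have hint : Integrable (fun ω => t ^ M.TF (k+1) v n ω) ℙ :=
      integrable_of_bounded_one (measurable_pow_nat (M.meas_TF _ v n) t)
        (fun ω => abs_pow_le_one ht _)
    rw [integral_partition (M.meas_Rv v n) hint]
    have hterm : ∀ m : ℕ, ∫ ω in M.Rv v n ⁻¹' {m}, t ^ M.TF (k+1) v n ω
        = ((ℙ (M.Rv v n ⁻¹' {m})).toReal * (t * ∏ j ∈ M.ch v, ψ j) ^ m)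
          * ∏ j ∈ M.ch v,
              Real.exp (lam * ∑ u ∈ M.subF k j, (1 - M.a u) * (η t u - 1)) := by
      intro m
      set A : Set Ω := M.Rv v n ⁻¹' {m} with hA
      have hAm : MeasurableSet A := M.meas_Rv v n (measurableSet_singleton m)
      have hAmS : MeasurableSet[M.mS (idx {v})] A :=
        M.meas_Rv_mS v n (measurableSet_singleton m)
      have hvch : v ∉ M.ch v := by
        intro hv'
        have := M.dep_child hv'
        omega
      set F : V → Ω → ℝ := fun j => if j = v then A.indicator (fun _ => t ^ m)
        else fun ω => t ^ M.TF k j m ω with hF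
      have step1 : ∫ ω in A, t ^ M.TF (k+1) v n ω
          = ∫ ω, ∏ j ∈ insert v (M.ch v), F j ω := by
        rw [← integral_indicator hAm]
        apply integral_congr_ae
        apply ae_of_all
        intro ω
        show A.indicator (fun ω => t ^ M.TF (k + 1) v n ω) ω
          = ∏ j ∈ insert v (M.ch v), F j ω
        rw [Finset.prod_insert hvch]
        have hFv : F v = A.indicator (fun _ => t ^ m) := if_pos rfl
        have hFj : ∀ j ∈ M.ch v, F j ω = t ^ M.TF k j m ω := by
          intro j hj
          have hne : j ≠ v := fun h => hvch (h ▸ hj)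
          show (if j = v then A.indicator (fun _ => t ^ m)
            else fun ω => t ^ M.TF k j m ω) ω = _
          rw [if_neg hne]
        by_cases hω : ω ∈ A
        · have hm : M.Rv v n ω = m := hω
          rw [Set.indicator_of_mem hω, hFv, Set.indicator_of_mem hω]
          rw [Finset.prod_congr rfl hFj]
          show t ^ M.TF (k+1) v n ω = t ^ m * ∏ j ∈ M.ch v, t ^ M.TF k j m ω
          rw [Finset.prod_pow_eq_pow_sum, ← pow_add]
          congr 1
          show M.TF (k+1) v n ω = _
          show M.Rv v n ω + ∑ j ∈ M.ch v, M.TF k j (M.Rv v n ω) ω = _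
          rw [hm]
        · rw [Set.indicator_of_notMem hω, hFv, Set.indicator_of_notMem hω, zero_mul]
      rw [step1]
      set S : V → Set (V ⊕ (V × ℕ)) := fun j => if j = v then idx {v}
        else idx (M.subF k j) with hS
      have hdisj : ∀ i ∈ insert v (M.ch v), ∀ j ∈ insert v (M.ch v), i ≠ j →
          Disjoint (S i) (S j) := by
        intro i hi j hj hij
        rw [Finset.mem_insert] at hi hj
        rcases hi with rfl | hi
        · rcases hj with rfl | hj
          · exact absurd rfl hij
          · have hne : j ≠ i := fun h => hvch (h ▸ hj)
            show Disjoint (if i = i then idx {i} else _) (if j = i then _ else idx (M.subF k j))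
            rw [if_pos rfl, if_neg hne]
            apply idx_disjoint
            rw [Finset.disjoint_singleton_left]
            apply M.not_mem_subF_of_dep
            have := M.dep_child hj
            omega
        · rcases hj with rfl | hj
          · have hne : i ≠ j := fun h => hvch (h ▸ hi)
            show Disjoint (if i = j then _ else idx (M.subF k i)) (if j = j then idx {j} else _)
            rw [if_pos rfl, if_neg hne]
            apply idx_disjoint
            rw [Finset.disjoint_singleton_right]
            apply M.not_mem_subF_of_dep
            have := M.dep_child hi
            omega
          · have hnei : i ≠ v := fun h => hvch (h ▸ hi)
            have hnej : j ≠ v := fun h => hvch (h ▸ hj)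
            show Disjoint (if i = v then _ else idx (M.subF k i))
              (if j = v then _ else idx (M.subF k j))
            rw [if_neg hnei, if_neg hnej]
            exact idx_disjoint (M.subF_child_disjoint hi hj hij)
      have hmeas : ∀ j ∈ insert v (M.ch v), Measurable[M.mS (S j)] (F j) := by
        intro j hj
        rw [Finset.mem_insert] at hj
        rcases hj with rfl | hj
        · show Measurable[M.mS (if j = j then idx {j} else _)]
            (if j = j then A.indicator (fun _ => t ^ m) else _)
          rw [if_pos rfl, if_pos rfl]
          exact measurable_const.indicator hAmS
        · have hne : j ≠ v := fun h => hvch (h ▸ hj)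
          show Measurable[M.mS (if j = v then _ else idx (M.subF k j))]
            (if j = v then _ else fun ω => t ^ M.TF k j m ω)
          rw [if_neg hne, if_neg hne]
          exact measurable_pow_nat (M.meas_TF_mS k j m) t
      have hbd : ∀ j ∈ insert v (M.ch v), ∀ ω, |F j ω| ≤ 1 := by
        intro j hj ω
        rw [Finset.mem_insert] at hj
        rcases hj with rfl | hj
        · show |(if j = j then A.indicator (fun _ => t ^ m) else _) ω| ≤ 1
          rw [if_pos rfl]
          by_cases hω : ω ∈ A
          · rw [Set.indicator_of_mem hω]; exact abs_pow_le_one ht m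
          · rw [Set.indicator_of_notMem hω]; simp
        · have hne : j ≠ v := fun h => hvch (h ▸ hj)
          show |(if j = v then _ else fun ω => t ^ M.TF k j m ω) ω| ≤ 1
          rw [if_neg hne]
          exact abs_pow_le_one ht _
      rw [M.integral_prod_indep (insert v (M.ch v)) S hdisj F hmeas hbd,
        Finset.prod_insert hvch]
      have hFv : ∫ ω, F v ω = (ℙ A).toReal * t ^ m := by
        have h0 : F v = A.indicator (fun _ => t ^ m) := if_pos rfl
        rw [h0, integral_indicator_const (t ^ m) hAm, smul_eq_mul, measureReal_def]
      have hFj : ∀ j ∈ M.ch v, ∫ ω, F j ω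
          = ψ j ^ m * Real.exp (lam * ∑ u ∈ M.subF k j, (1 - M.a u) * (η t u - 1)) := by
        intro j hj
        have hcond : Fintype.card V - 1 ≤ k + M.dep j := by
          have := M.dep_child hj
          omega
        have hne : j ≠ v := fun h => hvch (h ▸ hj)
        have h0 : F j = fun ω => t ^ M.TF k j m ω := if_neg hne
        rw [h0]
        exact ih j hcond m
      rw [hFv, Finset.prod_congr rfl hFj, Finset.prod_mul_distrib, Finset.prod_pow,
        mul_pow]
      ring
    rw [tsum_congr hterm, tsum_mul_right,
      tsum_pmf_eq_integral_pow (M.meas_Rv v n) hs, M.pgf_Rv v n hs, ← hηv,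
      M.sum_subF_succ]
    have hdist : lam * ((1 - M.a v) * (η t v - 1)
        + ∑ j ∈ M.ch v, ∑ u ∈ M.subF k j, (1 - M.a u) * (η t u - 1))
        = lam * ((1 - M.a v) * (η t v - 1))
          + ∑ j ∈ M.ch v, lam * ∑ u ∈ M.subF k j, (1 - M.a u) * (η t u - 1) := by
      rw [mul_add, Finset.mul_sum]
    rw [hdist, ← mul_assoc lam (1 - M.a v) (η t v - 1), Real.exp_add, Real.exp_sum]
    ring

end MPMRF
namespace MPMRF
variable {V : Type} [Fintype V] [DecidableEq V]
    {G : SimpleGraph V} [DecidableRel G.Adj] {lam : ℝ} {alpha : Sym2 V → ℝ}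
    {Ω : Type} [MeasureSpace Ω] [IsProbabilityMeasure (ℙ : Measure Ω)]
    (M : MPMRF G lam alpha Ω)

include M

lemma part2 (η : ℝ → V → ℝ)
    (hη : ∀ (t : ℝ) (v : V), η t v
      = t * ∏ j ∈ Finset.univ.filter (fun j => j ≠ M.root ∧ M.pa j = v),
          (1 - alpha s(v, j) + alpha s(v, j) * η t j)) :
    ∀ t ∈ Set.Icc (-1 : ℝ) 1,
        ∫ ω, (t : ℝ) ^ (∑ v : V, M.N v ω) ∂ℙ
          = Real.exp (lam * ((Fintype.card V : ℝ) - ∑ e ∈ G.edgeFinset, alpha e)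
              * ((∑ v : V,
                    ((1 - if v = M.root then 0 else alpha s(M.pa v, v))
                        / ((Fintype.card V : ℝ) - ∑ e ∈ G.edgeFinset, alpha e))
                      * η t v) - 1)) := by
  intro t ht
  have habs : |t| ≤ 1 := abs_le.2 ⟨ht.1, ht.2⟩
  set D : ℝ := (Fintype.card V : ℝ) - ∑ e ∈ G.edgeFinset, alpha e with hD
  have hDpos : 0 < D := M.D_pos
  have hsumD : ∑ v, (1 - M.a v) = D := by
    rw [hD, M.sum_alpha_edges, Finset.sum_sub_distrib]
    simp [Finset.card_univ]
  have h1 : ∫ ω, (t : ℝ) ^ (∑ v : V, M.N v ω) ∂ℙ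
      = ∫ ω, t ^ M.TF (Fintype.card V) M.root 0 ω := by
    apply integral_congr_ae
    apply ae_of_all
    intro ω
    show t ^ (∑ v : V, M.N v ω) = t ^ M.TF (Fintype.card V) M.root 0 ω
    rw [M.TF_eq_sum_N (Fintype.card V) M.root 0 ω (Or.inl rfl), M.subF_root_eq_univ]
  rw [h1, M.pgf_TF η hη habs (Fintype.card V) M.root (by rw [M.dep_root]; omega) 0,
    pow_zero, one_mul, M.subF_root_eq_univ]
  have h2 : ∑ u : V, (1 - M.a u) * (η t u - 1) = (∑ u : V, (1 - M.a u) * η t u) - D := by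
    rw [← hsumD, ← Finset.sum_sub_distrib]
    apply Finset.sum_congr rfl
    intro u _
    ring
  have h3 : ∑ v : V, ((1 - if v = M.root then 0 else alpha s(M.pa v, v)) / D) * η t v
      = (∑ u : V, (1 - M.a u) * η t u) / D := by
    rw [Finset.sum_div]
    apply Finset.sum_congr rfl
    intro u _
    rw [a]
    ring
  rw [h2, h3]
  congr 1
  field_simp

theorem main (η : ℝ → V → ℝ)
    (hη : ∀ (t : ℝ) (v : V), η t v
      = t * ∏ j ∈ Finset.univ.filter (fun j => j ≠ M.root ∧ M.pa j = v),
          (1 - alpha s(v, j) + alpha s(v, j) * η t j)) :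
    (0 < lam * ((Fintype.card V : ℝ) - ∑ e ∈ G.edgeFinset, alpha e))
    ∧ (∀ t ∈ Set.Icc (-1 : ℝ) 1,
        ∫ ω, (t : ℝ) ^ (∑ v : V, M.N v ω) ∂ℙ
          = Real.exp (lam * ((Fintype.card V : ℝ) - ∑ e ∈ G.edgeFinset, alpha e)
              * ((∑ v : V,
                    ((1 - if v = M.root then 0 else alpha s(M.pa v, v))
                        / ((Fintype.card V : ℝ) - ∑ e ∈ G.edgeFinset, alpha e))
                      * η t v) - 1)))
    ∧ (∃ p : ℕ → ℝ, (∀ k, 0 ≤ p k) ∧ (∑' k : ℕ, p k) = 1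
        ∧ (∀ t ∈ Set.Icc (-1 : ℝ) 1,
            (∑' k : ℕ, p k * t ^ k)
              = ∑ v : V,
                  ((1 - if v = M.root then 0 else alpha s(M.pa v, v))
                      / ((Fintype.card V : ℝ) - ∑ e ∈ G.edgeFinset, alpha e))
                    * η t v)
        ∧ (∑' k : ℕ, (k : ℝ) * p k)
            = (Fintype.card V : ℝ)
              / ((Fintype.card V : ℝ) - ∑ e ∈ G.edgeFinset, alpha e)) :=
  ⟨mul_pos M.lam_pos M.D_pos, M.part2 η hη, M.part3 η hη⟩

end MPMRF


/-- Distribution of the sum: `M = Σ_v N_v` is compound Poisson with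
primary parameter `λ_M = λ(d − Σ_{e∈E} α_e) > 0` and secondary pgf
`P_C(t) = Σ_v ((1 − α_{(pa v, v)})/(d − Σ_e α_e)) η_v(t·1)` (with the convention
`α_{(pa r, r)} = 0`), where the `η_v` satisfy the recursion of the joint pgf evaluated
at `t·1`; moreover `P_C` is the pgf of an `ℕ`-valued random variable with mean
`d/(d − Σ_e α_e)`. -/
theorem mpmrf_sum_compound_poisson {V : Type} [Fintype V] [DecidableEq V]
    (G : SimpleGraph V) [DecidableRel G.Adj] (lam : ℝ) (alpha : Sym2 V → ℝ)
    (Ω : Type) [MeasureSpace Ω] [IsProbabilityMeasure (ℙ : Measure Ω)]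
    (M : MPMRF G lam alpha Ω)
    (η : ℝ → V → ℝ)
    (hη : ∀ (t : ℝ) (v : V), η t v
      = t * ∏ j ∈ Finset.univ.filter (fun j => j ≠ M.root ∧ M.pa j = v),
          (1 - alpha s(v, j) + alpha s(v, j) * η t j)) :
    (0 < lam * ((Fintype.card V : ℝ) - ∑ e ∈ G.edgeFinset, alpha e))
    ∧ (∀ t ∈ Set.Icc (-1 : ℝ) 1,
        ∫ ω, (t : ℝ) ^ (∑ v : V, M.N v ω) ∂ℙ
          = Real.exp (lam * ((Fintype.card V : ℝ) - ∑ e ∈ G.edgeFinset, alpha e)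
              * ((∑ v : V,
                    ((1 - if v = M.root then 0 else alpha s(M.pa v, v))
                        / ((Fintype.card V : ℝ) - ∑ e ∈ G.edgeFinset, alpha e))
                      * η t v) - 1)))
    ∧ (∃ p : ℕ → ℝ, (∀ k, 0 ≤ p k) ∧ (∑' k : ℕ, p k) = 1
        ∧ (∀ t ∈ Set.Icc (-1 : ℝ) 1,
            (∑' k : ℕ, p k * t ^ k)
              = ∑ v : V,
                  ((1 - if v = M.root then 0 else alpha s(M.pa v, v))
                      / ((Fintype.card V : ℝ) - ∑ e ∈ G.edgeFinset, alpha e))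
                    * η t v)
        ∧ (∑' k : ℕ, (k : ℝ) * p k)
            = (Fintype.card V : ℝ)
              / ((Fintype.card V : ℝ) - ∑ e ∈ G.edgeFinset, alpha e)) := by
  exact M.main η hη
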